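/- Let r ≥ 3, n = p_1^{n_1}⋯p_r^{n_r} with primes p_1 < ... < p_r, a < b in [r], s ∈ [n_a], t ∈ [n_b], and β defined by β_a^s = φ(n) + (n/(p_1⋯p_r))·(1/p_a^{s-1})·[ (p_1⋯p_r)/p_a + φ((p_1⋯p_r)/p_a)·(p_a^{s-1} − 2) ]. If p_a^{s-1} ≤ p_b^{t-1} and 2·φ((p_1⋯p_r)/p_a) < (p_1⋯p_r)/p_a, then β_a^s > β_b^t. -/

import Mathlib

noncomputable def beta (r : ℕ) (p e : ℕ → ℕ) (a s : ℕ) : ℚ :=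
  (Nat.totient (∏ i ∈ Finset.range r, p i ^ e i) : ℚ) +
    ((∏ i ∈ Finset.range r, p i ^ e i : ℕ) : ℚ) /
        ((∏ i ∈ Finset.range r, p i : ℕ) : ℚ) *
      (1 / (p a : ℚ) ^ (s - 1)) *
      (((∏ i ∈ Finset.range r, p i : ℕ) : ℚ) / (p a : ℚ) +
        (Nat.totient ((∏ i ∈ Finset.range r, p i) / p a) : ℚ) *
          ((p a : ℚ) ^ (s - 1) - 2))

set_option maxHeartbeats 1000000 in
theorem stmt_14 (r : ℕ) (hr : 3 ≤ r) (p e : ℕ → ℕ)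
    (hp : ∀ i < r, (p i).Prime)
    (hmono : ∀ i j, i < j → j < r → p i < p j)
    (he : ∀ i < r, 1 ≤ e i)
    (a b : ℕ) (hab : a < b) (hb : b < r)
    (s t : ℕ) (hs1 : 1 ≤ s) (hs : s ≤ e a) (ht1 : 1 ≤ t) (ht : t ≤ e b)
    (hpow : p a ^ (s - 1) ≤ p b ^ (t - 1))
    (hphi : 2 * Nat.totient ((∏ i ∈ Finset.range r, p i) / p a) <
      (∏ i ∈ Finset.range r, p i) / p a) :
    beta r p e a s > beta r p e b t := by
  have ha : a < r := hab.trans hb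
  have hpa := hp a ha
  have hpb := hp b hb
  have pinj : ∀ i j, i < r → j < r → i ≠ j → p i ≠ p j := by
    intro i j hi hj hij
    rcases lt_or_gt_of_ne hij with h | h
    · exact (hmono i j h hj).ne
    · exact (hmono j i h hi).ne'
  simp only [beta]
  set S := Finset.range r with hSdef
  have haS : a ∈ S := Finset.mem_range.mpr ha
  have hbS' : b ∈ S.erase a := Finset.mem_erase.mpr ⟨hab.ne', Finset.mem_range.mpr hb⟩
  set s2 := (S.erase a).erase b with hs2def
  set M := ∏ i ∈ s2, p i with hMdef
  set P := ∏ i ∈ S, p i with hPdef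
  have hmem : ∀ i ∈ s2, i < r ∧ i ≠ a ∧ i ≠ b := by
    intro i hi
    simp only [hs2def, Finset.mem_erase, Finset.mem_range, hSdef] at hi
    exact ⟨hi.2.2, hi.2.1, hi.1⟩
  have hPfac : P = p a * (p b * M) := by
    rw [hPdef, ← Finset.mul_prod_erase S p haS, ← Finset.mul_prod_erase _ p hbS']
  -- s2 is nonempty
  have hcard : s2.card = r - 2 := by
    rw [hs2def, Finset.card_erase_of_mem hbS', Finset.card_erase_of_mem haS,
      hSdef, Finset.card_range]
    omega
  have hs2ne : s2.Nonempty := by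
    apply Finset.card_pos.mp; omega
  obtain ⟨c, hc⟩ := hs2ne
  have hM2 : 2 ≤ M := by
    calc (2:ℕ) ≤ p c := (hp c (hmem c hc).1).two_le
    _ ≤ M := Finset.single_le_prod' (fun i hi => (hp i (hmem i hi).1).pos) hc
  have hfM : Nat.totient M < M := Nat.totient_lt M (by omega)
  -- coprimality
  have hcopa : Nat.Coprime (p a) M := by
    apply Nat.Coprime.prod_right
    intro i hi
    exact (Nat.coprime_primes hpa (hp i (hmem i hi).1)).mpr
      (pinj a i ha (hmem i hi).1 (Ne.symm (hmem i hi).2.1))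
  have hcopb : Nat.Coprime (p b) M := by
    apply Nat.Coprime.prod_right
    intro i hi
    exact (Nat.coprime_primes hpb (hp i (hmem i hi).1)).mpr
      (pinj b i hb (hmem i hi).1 (Ne.symm (hmem i hi).2.2))
  -- nat division facts
  have hQa : P / p a = p b * M := by
    rw [hPfac]; exact Nat.mul_div_cancel_left _ hpa.pos
  have hQb : P / p b = p a * M := by
    rw [hPfac, show p a * (p b * M) = p b * (p a * M) by ring]
    exact Nat.mul_div_cancel_left _ hpb.pos
  have hFA : Nat.totient (P / p a) = (p b - 1) * Nat.totient M := by
    rw [hQa, Nat.totient_mul hcopb, Nat.totient_prime hpb]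
  have hFB : Nat.totient (P / p b) = (p a - 1) * Nat.totient M := by
    rw [hQb, Nat.totient_mul hcopa, Nat.totient_prime hpa]
  rw [hFA, hFB]
  -- rational facts
  have hpaq1 : (1:ℚ) < (p a : ℚ) := by exact_mod_cast hpa.one_lt
  have hpbq1 : (1:ℚ) < (p b : ℚ) := by exact_mod_cast hpb.one_lt
  have hDq : (p a : ℚ) < (p b : ℚ) := by exact_mod_cast hmono a b hab hb
  have hMq : (Nat.totient M : ℚ) < (M : ℚ) := by exact_mod_cast hfM
  have hfM0 : (0:ℚ) ≤ (Nat.totient M : ℚ) := by positivity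
  have hphiq : 2 * (((p b : ℚ) - 1) * (Nat.totient M : ℚ)) < (p b : ℚ) * (M : ℚ) := by
    rw [hFA, hQa] at hphi
    have := (Nat.cast_lt (α := ℚ)).mpr hphi
    push_cast [Nat.cast_sub hpb.one_le] at this
    linarith
  -- cast of totient differences
  have hcastA : (((p b - 1) * Nat.totient M : ℕ) : ℚ) = ((p b : ℚ) - 1) * (Nat.totient M : ℚ) := by
    push_cast [Nat.cast_sub hpb.one_le]; ring
  have hcastB : (((p a - 1) * Nat.totient M : ℕ) : ℚ) = ((p a : ℚ) - 1) * (Nat.totient M : ℚ) := by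
    push_cast [Nat.cast_sub hpa.one_le]; ring
  rw [hcastA, hcastB]
  -- rewrite the rational divisions P/pa, P/pb
  have hpaq0 : (p a : ℚ) ≠ 0 := by positivity
  have hpbq0 : (p b : ℚ) ≠ 0 := by positivity
  have hQAq : ((P : ℕ) : ℚ) / (p a : ℚ) = (p b : ℚ) * (M : ℚ) := by
    rw [hPfac]; push_cast; field_simp
  have hQBq : ((P : ℕ) : ℚ) / (p b : ℚ) = (p a : ℚ) * (M : ℚ) := by
    rw [hPfac]; push_cast; field_simp
  rw [hQAq, hQBq]
  set x : ℚ := (p a : ℚ) ^ (s - 1) with hxdef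
  set y : ℚ := (p b : ℚ) ^ (t - 1) with hydef
  have hx1 : (1:ℚ) ≤ x := one_le_pow₀ hpaq1.le
  have hy1 : (1:ℚ) ≤ y := one_le_pow₀ hpbq1.le
  have hxy : x ≤ y := by
    rw [hxdef, hydef]
    exact_mod_cast hpow
  have hx0 : (0:ℚ) < x := by linarith
  have hy0 : (0:ℚ) < y := by linarith
  -- positivity of the prefactor
  have hN0 : (0:ℚ) < ((∏ i ∈ S, p i ^ e i : ℕ) : ℚ) := by
    have : 0 < ∏ i ∈ S, p i ^ e i :=
      Finset.prod_pos fun i hi => pow_pos (hp i (Finset.mem_range.mp hi)).pos _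
    exact_mod_cast this
  have hP0 : (0:ℚ) < ((P : ℕ) : ℚ) := by
    have : 0 < P := by
      rw [hPfac]
      have := hpa.pos; have := hpb.pos
      nlinarith [hM2]
    exact_mod_cast this
  have hK : (0:ℚ) < ((∏ i ∈ S, p i ^ e i : ℕ) : ℚ) / ((P : ℕ) : ℚ) := div_pos hN0 hP0
  -- the core inequality
  set Mq : ℚ := (M : ℚ) with hMq'
  set fM : ℚ := (Nat.totient M : ℚ) with hfM'
  have key : (1/y) * ((p a : ℚ) * Mq + ((p a : ℚ) - 1) * fM * (y - 2)) <
      (1/x) * ((p b : ℚ) * Mq + ((p b : ℚ) - 1) * fM * (x - 2)) := by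
    have step1 : (1/y) * ((p a : ℚ) * Mq + ((p a : ℚ) - 1) * fM * (y - 2)) <
        (1/y) * ((p b : ℚ) * Mq + ((p b : ℚ) - 1) * fM * (y - 2)) := by
      have hinner : (p a : ℚ) * Mq + ((p a : ℚ) - 1) * fM * (y - 2) <
          (p b : ℚ) * Mq + ((p b : ℚ) - 1) * fM * (y - 2) := by
        have h1 : (0:ℚ) < Mq + fM * (y - 2) := by nlinarith
        nlinarith [mul_pos (sub_pos.mpr hDq) h1]
      exact mul_lt_mul_of_pos_left hinner (one_div_pos.mpr hy0)
    have step2 : (1/y) * ((p b : ℚ) * Mq + ((p b : ℚ) - 1) * fM * (y - 2)) ≤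
        (1/x) * ((p b : ℚ) * Mq + ((p b : ℚ) - 1) * fM * (x - 2)) := by
      rw [one_div_mul_eq_div, one_div_mul_eq_div, div_le_div_iff₀ hy0 hx0]
      nlinarith [mul_nonneg (sub_nonneg.mpr hxy) (by linarith : (0:ℚ) ≤ (p b : ℚ) * Mq - 2 * (((p b : ℚ) - 1) * fM))]
    exact step1.trans_le step2
  have final := mul_lt_mul_of_pos_left key hK
  rw [gt_iff_lt]
  nlinarith [final]
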